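/- For all sufficiently large n there exists a pair (m_n, ℓ_n) ∈ ℤ² which is θ-minimal on scale q_n. -/

import Mathlib

open Real Filter

noncomputable section

/-- Distance from a real number to the nearest integer. -/
def distZ (x : ℝ) : ℝ := |x - (round x : ℝ)|

/-- Iterates of the Gauss map applied to `α`. -/
def gaussIter (α : ℝ) : ℕ → ℝ
  | 0 => Int.fract α
  | n + 1 => Int.fract (gaussIter α n)⁻¹

/-- Partial quotients of the continued fraction expansion of `α`. -/
def cfA (α : ℝ) : ℕ → ℤ
  | 0 => ⌊α⌋
  | n + 1 => ⌊(gaussIter α n)⁻¹⌋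

/-- Denominators `q_n` of the continued fraction approximants of `α`,
satisfying `q 0 = 1`, `q 1 = a 1`, `q (n+2) = a (n+2) * q (n+1) + q n`. -/
def cfQ (α : ℝ) : ℕ → ℤ
  | 0 => 1
  | 1 => cfA α 1
  | n + 2 => cfA α (n + 2) * cfQ α (n + 1) + cfQ α n

/-- `β(α) = limsup (ln q_{n+1})/q_n`. -/
def cfBeta (α : ℝ) : ℝ :=
  limsup (fun n : ℕ => Real.log ((cfQ α (n + 1) : ℝ)) / (cfQ α n : ℝ)) atTop

/-- `β_n = (ln q_{n+1})/q_n`. -/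
def betaIdx (α : ℝ) (n : ℕ) : ℝ := Real.log ((cfQ α (n + 1) : ℝ)) / (cfQ α n : ℝ)

/-- `δ_n = (ln ‖q_n (θ - 1/2)‖ - ln ‖q_n α‖)/q_n`. -/
def deltaIdx (α θ : ℝ) (n : ℕ) : ℝ :=
  (Real.log (distZ ((cfQ α n : ℝ) * (θ - 1 / 2))) -
      Real.log (distZ ((cfQ α n : ℝ) * α))) / (cfQ α n : ℝ)

/-- `δ(α, θ) = limsup (ln q_{n+1} + ln ‖q_n (θ - 1/2)‖)/q_n`. -/
def deltaMar (α θ : ℝ) : ℝ :=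
  limsup (fun n : ℕ =>
      (Real.log ((cfQ α (n + 1) : ℝ)) +
        Real.log (distZ ((cfQ α n : ℝ) * (θ - 1 / 2)))) / (cfQ α n : ℝ)) atTop

/-- `P_k(x)`: the determinant of the `k×k` tridiagonal matrix with diagonal entries
`E - λ tan(π(x + jα))`, `j = 0,…,k-1`, and off-diagonal entries `-1`. -/
def marylandP (α lam E : ℝ) (k : ℕ) (x : ℝ) : ℝ :=
  (Matrix.of fun i j : Fin k =>
      if (i : ℕ) = (j : ℕ) then E - lam * Real.tan (π * (x + ((i : ℕ) : ℝ) * α))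
      else if (i : ℕ) = (j : ℕ) + 1 ∨ (j : ℕ) = (i : ℕ) + 1 then (-1 : ℝ) else 0).det

/-- `tildeP_k(x) = (∏_{j<k} cos(π(x + jα))) * P_k(x)`. -/
def marylandPt (α lam E : ℝ) (k : ℕ) (x : ℝ) : ℝ :=
  (∏ j ∈ Finset.range k, Real.cos (π * (x + (j : ℝ) * α))) * marylandP α lam E k x

/-- Distance from the integer `y` to `q ℤ` (for `q > 0`). -/
def distResid (y q : ℤ) : ℤ := min (y % q) (q - y % q)

/-- The maximum of `|φ|` over the integer interval `[lo, hi]`. -/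
def rmax (φ : ℤ → ℝ) (lo hi : ℤ) : ℝ := sSup ((fun y => |φ y|) '' Set.Icc lo hi)

/-- `γ`-uniformity of the family of points `f l`, `l ∈ I`. -/
def IsUniformOn (γ : ℝ) (I : Finset ℤ) (f : ℤ → ℝ) : Prop :=
  ∀ x ∈ Set.Icc (0 : ℝ) 1, ∀ j ∈ I,
    (∏ l ∈ I.erase j, (|Real.sin (π * (x - f l))| / |Real.sin (π * (f j - f l))|)) <
      Real.exp (γ * ((I.card : ℝ) - 1))

/-- The interval `I_ℓ = [(ℓ-1) q_n - ⌊q_n/2⌋, ℓ q_n - ⌊q_n/2⌋ - 1] ∩ ℤ`. -/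
def Iseg (α : ℝ) (n : ℕ) (ℓ : ℤ) : Finset ℤ :=
  Finset.Icc ((ℓ - 1) * cfQ α n - cfQ α n / 2) (ℓ * cfQ α n - cfQ α n / 2 - 1)

/-- `(m, ℓ)` is `θ`-minimal on scale `q_n`. -/
def ThetaMinimal (α θ : ℝ) (n : ℕ) (m ℓ : ℤ) : Prop :=
  (-(cfQ α n : ℝ) / 2 ≤ (m : ℝ) ∧ (m : ℝ) < (cfQ α n : ℝ) / 2) ∧
  ((|ℓ| : ℝ) ≤
      (Real.exp (deltaIdx α θ n * (cfQ α n : ℝ)) + (cfQ α n : ℝ) + 1 / 2) / (cfQ α n : ℝ)) ∧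
  (distZ (θ - 1 / 2 + ((m : ℝ) + (ℓ : ℝ) * (cfQ α n : ℝ)) * α) <
      (1 / 2 + 1 / (2 * (cfQ α n : ℝ))) * distZ ((cfQ α n : ℝ) * α)) ∧
  (4 ≤ cfA α (n + 1) →
      ∀ j : ℤ, (|j| : ℝ) ≤ (cfA α (n + 1) : ℝ) / 6 →
        ∀ k : ℤ, |k| < cfQ α n →
          distZ (θ - 1 / 2 + ((m : ℝ) + (j : ℝ) * (cfQ α n : ℝ)) * α) ≤
            20 * distZ (θ - 1 / 2 + ((m : ℝ) + (j : ℝ) * (cfQ α n : ℝ) + (k : ℝ)) * α)) ∧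
  (cfA α (n + 1) ≤ 3 →
      ∀ k : ℤ, -(cfQ α n : ℝ) / 2 ≤ (k : ℝ) → (k : ℝ) < (cfQ α n : ℝ) / 2 →
        distZ (θ - 1 / 2 + (m : ℝ) * α) ≤ 20 * distZ (θ - 1 / 2 + (k : ℝ) * α))

end


noncomputable section Aux
set_option linter.unusedSectionVars false
set_option linter.unusedTactic false
set_option linter.unusedVariables false

-- distZ lemmas
lemma distZ_nonneg (x : ℝ) : 0 ≤ distZ x := abs_nonneg _

lemma distZ_le_abs_sub_int (x : ℝ) (m : ℤ) : distZ x ≤ |x - m| := round_le x m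

lemma distZ_add_int (x : ℝ) (m : ℤ) : distZ (x + m) = distZ x := by
  unfold distZ
  rw [round_add_intCast]
  push_cast
  ring_nf

lemma distZ_neg (x : ℝ) : distZ (-x) = distZ x := by
  have h1 : distZ (-x) ≤ distZ x := by
    calc distZ (-x) ≤ |(-x) - ((-(round x) : ℤ) : ℝ)| := distZ_le_abs_sub_int _ _
    _ = |x - round x| := by push_cast; rw [← abs_neg]; ring_nf
    _ = distZ x := rfl
  have h2 : distZ x ≤ distZ (-x) := by
    calc distZ x ≤ |x - ((-(round (-x)) : ℤ) : ℝ)| := distZ_le_abs_sub_int _ _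
    _ = |(-x) - round (-x)| := by push_cast; rw [← abs_neg]; ring_nf
    _ = distZ (-x) := rfl
  linarith

lemma distZ_add_le (x y : ℝ) : distZ (x + y) ≤ distZ x + distZ y := by
  calc distZ (x + y) ≤ |x + y - ((round x + round y : ℤ) : ℝ)| := distZ_le_abs_sub_int _ _
  _ = |(x - round x) + (y - round y)| := by push_cast; ring_nf
  _ ≤ |x - round x| + |y - round y| := abs_add_le _ _
  _ = distZ x + distZ y := rfl

lemma distZ_add_abs_le (x y : ℝ) : distZ (x + y) ≤ distZ x + |y| := by
  calc distZ (x + y) ≤ |x + y - (round x : ℝ)| := distZ_le_abs_sub_int _ _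
  _ = |(x - round x) + y| := by ring_nf
  _ ≤ |x - round x| + |y| := abs_add_le _ _
  _ = distZ x + |y| := rfl

lemma distZ_sub_le (x y : ℝ) : distZ (x - y) ≤ distZ x + distZ y := by
  rw [sub_eq_add_neg]
  calc distZ (x + -y) ≤ distZ x + distZ (-y) := distZ_add_le _ _
  _ = distZ x + distZ y := by rw [distZ_neg]

lemma distZ_le_half (x : ℝ) : distZ x ≤ 1/2 := abs_sub_round x

lemma abs_round_le (y : ℝ) : (|round y| : ℝ) ≤ |y| + 1/2 := by
  have h := abs_sub_round y
  have : |(round y : ℝ)| ≤ |(round y : ℝ) - y| + |y| := by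
    calc |(round y : ℝ)| = |((round y : ℝ) - y) + y| := by ring_nf
    _ ≤ |(round y : ℝ) - y| + |y| := abs_add_le _ _
  rw [abs_sub_comm] at this
  push_cast
  linarith

section CF
variable {α : ℝ} (hα : α ∈ Set.Ioo (0:ℝ) 1) (hirr : Irrational α)
include hα hirr

lemma gauss_mem : ∀ n, gaussIter α n ∈ Set.Ioo (0:ℝ) 1 ∧ Irrational (gaussIter α n) := by
  intro n
  induction n with
  | zero =>
    have : Int.fract α = α := Int.fract_eq_self.2 ⟨hα.1.le, hα.2⟩
    rw [gaussIter, this]; exact ⟨hα, hirr⟩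
  | succ n ih =>
    obtain ⟨⟨h0, h1⟩, hi⟩ := ih
    have hinv : Irrational (gaussIter α n)⁻¹ := irrational_inv_iff.2 hi
    have hfr : Irrational (Int.fract (gaussIter α n)⁻¹) := by
      rw [Int.fract]; exact hinv.sub_intCast _
    constructor
    · constructor
      · rcases lt_or_eq_of_le (Int.fract_nonneg (gaussIter α n)⁻¹) with h | h
        · exact h
        · exfalso; rw [← h] at hfr; exact hfr ⟨0, by norm_num⟩
      · exact Int.fract_lt_one _
    · exact hfr

end CF

def etaCF (α : ℝ) : ℕ → ℝ
  | 0 => gaussIter α 0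
  | n + 1 => etaCF α n * gaussIter α (n + 1)

def cfP (α : ℝ) : ℕ → ℤ
  | 0 => 0
  | 1 => 1
  | n + 2 => cfA α (n + 2) * cfP α (n + 1) + cfP α n

section CF2
variable {α : ℝ} (hα : α ∈ Set.Ioo (0:ℝ) 1) (hirr : Irrational α)
include hα hirr

lemma gauss_pos (n : ℕ) : 0 < gaussIter α n := (gauss_mem hα hirr n).1.1
lemma gauss_lt_one (n : ℕ) : gaussIter α n < 1 := (gauss_mem hα hirr n).1.2

lemma cfA_recur (n : ℕ) : (gaussIter α n)⁻¹ = (cfA α (n+1) : ℝ) + gaussIter α (n+1) := by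
  have : gaussIter α (n+1) = Int.fract (gaussIter α n)⁻¹ := rfl
  rw [this, Int.fract, cfA]; ring

lemma cfA_pos (n : ℕ) : 1 ≤ cfA α (n + 1) := by
  have h0 := gauss_pos hα hirr n
  have h1 := gauss_lt_one hα hirr n
  have h2 : (1:ℝ) < (gaussIter α n)⁻¹ := (one_lt_inv₀ h0).2 h1
  have h3 : ((1:ℤ):ℝ) ≤ (gaussIter α n)⁻¹ := by push_cast; exact le_of_lt h2
  have := Int.le_floor.2 h3
  simpa [cfA] using this

lemma etaCF_pos (n : ℕ) : 0 < etaCF α n := by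
  induction n with
  | zero => exact gauss_pos hα hirr 0
  | succ n ih => exact mul_pos ih (gauss_pos hα hirr (n+1))

lemma etaCF_succ_lt (n : ℕ) : etaCF α (n + 1) < etaCF α n := by
  have := etaCF_pos hα hirr n
  have h1 := gauss_lt_one hα hirr (n+1)
  calc etaCF α (n+1) = etaCF α n * gaussIter α (n+1) := rfl
  _ < etaCF α n * 1 := by apply mul_lt_mul_of_pos_left h1 this
  _ = etaCF α n := mul_one _

lemma etaCF_recur (n : ℕ) :
    etaCF α n = (cfA α (n+2) : ℝ) * etaCF α (n+1) + etaCF α (n+2) := by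
  have hx : gaussIter α (n+1) ≠ 0 := ne_of_gt (gauss_pos hα hirr (n+1))
  have h2 : etaCF α (n+2) = etaCF α (n+1) * gaussIter α (n+2) := rfl
  have h1 : etaCF α (n+1) = etaCF α n * gaussIter α (n+1) := rfl
  have hr := cfA_recur hα hirr (n+1)
  -- (x_{n+1})⁻¹ = a_{n+2} + x_{n+2}
  have : etaCF α (n+1) * (gaussIter α (n+1))⁻¹ = etaCF α n := by
    rw [h1]; field_simp
  calc etaCF α n = etaCF α (n+1) * (gaussIter α (n+1))⁻¹ := this.symm
  _ = etaCF α (n+1) * ((cfA α (n+2) : ℝ) + gaussIter α (n+2)) := by rw [hr]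
  _ = (cfA α (n+2) : ℝ) * etaCF α (n+1) + etaCF α (n+2) := by rw [h2]; ring

lemma etaCF_one_lt_half : etaCF α 1 < 1/2 := by
  have h00 := gauss_pos hα hirr 0
  have h01 := gauss_lt_one hα hirr 0
  have h10 := gauss_pos hα hirr 1
  have h11 := gauss_lt_one hα hirr 1
  have h1 : etaCF α 1 = etaCF α 0 * gaussIter α 1 := rfl
  have h0 : etaCF α 0 = gaussIter α 0 := rfl
  rcases le_or_gt (gaussIter α 0) (1/2) with h | h
  · rw [h1, h0]
    calc gaussIter α 0 * gaussIter α 1 < gaussIter α 0 * 1 := by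
          exact mul_lt_mul_of_pos_left h11 h00
    _ = gaussIter α 0 := mul_one _
    _ ≤ 1/2 := h
  · -- a₁ = 1, η₁ = 1 - x₀
    have hinv : (1:ℝ) < (gaussIter α 0)⁻¹ := (one_lt_inv₀ h00).2 h01
    have hinv2 : (gaussIter α 0)⁻¹ < 2 := by
      rw [inv_lt_iff_one_lt_mul₀ h00]; linarith
    have ha : cfA α 1 = 1 := by
      have : ⌊(gaussIter α 0)⁻¹⌋ = 1 := by
        apply Int.floor_eq_iff.2; constructor <;> push_cast <;> linarith
      simpa [cfA] using this
    have := cfA_recur hα hirr 0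
    rw [ha] at this
    push_cast at this
    have hx1 : gaussIter α 1 = (gaussIter α 0)⁻¹ - 1 := by linarith
    rw [h1, h0, hx1]
    have : gaussIter α 0 * ((gaussIter α 0)⁻¹ - 1) = 1 - gaussIter α 0 := by
      field_simp
    rw [this]; linarith

lemma etaCF_lt_half (n : ℕ) (hn : 1 ≤ n) : etaCF α n < 1/2 := by
  induction n with
  | zero => omega
  | succ n ih =>
    rcases Nat.eq_or_lt_of_le hn with h | h
    · rw [← h] at *; exact etaCF_one_lt_half hα hirr
    · have := etaCF_succ_lt hα hirr n
      have := ih (by omega)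
      linarith

lemma cfQ_pos : ∀ n, 1 ≤ cfQ α n := by
  have H : ∀ n, 1 ≤ cfQ α n ∧ 1 ≤ cfQ α (n+1) := by
    intro n
    induction n with
    | zero =>
      refine ⟨by norm_num [cfQ], ?_⟩
      have := cfA_pos hα hirr 0
      simpa [cfQ] using this
    | succ n ih =>
      refine ⟨ih.2, ?_⟩
      have ha := cfA_pos hα hirr (n+1)
      have : cfQ α (n+2) = cfA α (n+2) * cfQ α (n+1) + cfQ α n := rfl
      rw [this]
      nlinarith [ih.1, ih.2]
  exact fun n => (H n).1

lemma cfQ_identity : ∀ n, (cfQ α n : ℝ) * α - (cfP α n : ℝ) = (-1)^n * etaCF α n := by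
  have base0 : (cfQ α 0 : ℝ) * α - (cfP α 0 : ℝ) = (-1)^0 * etaCF α 0 := by
    have : gaussIter α 0 = α := Int.fract_eq_self.2 ⟨hα.1.le, hα.2⟩
    simp [cfQ, cfP, etaCF, this]
  have base1 : (cfQ α 1 : ℝ) * α - (cfP α 1 : ℝ) = (-1)^1 * etaCF α 1 := by
    have hx0 : gaussIter α 0 = α := Int.fract_eq_self.2 ⟨hα.1.le, hα.2⟩
    have hr := cfA_recur hα hirr 0
    rw [hx0] at hr
    have hq1 : cfQ α 1 = cfA α 1 := rfl
    have hp1 : cfP α 1 = 1 := rfl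
    have he1 : etaCF α 1 = etaCF α 0 * gaussIter α 1 := rfl
    have he0 : etaCF α 0 = α := by rw [show etaCF α 0 = gaussIter α 0 from rfl, hx0]
    have hαne : α ≠ 0 := ne_of_gt hα.1
    rw [hq1, hp1, he1, he0]
    have hg1 : gaussIter α 1 = α⁻¹ - (cfA α 1 : ℝ) := by linarith
    rw [hg1]
    push_cast
    field_simp
    ring
  intro n
  induction n using Nat.twoStepInduction with
  | zero => exact base0
  | one => exact base1
  | more n ih1 ih2 =>
    have hq : cfQ α (n+2) = cfA α (n+2) * cfQ α (n+1) + cfQ α n := rfl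
    have hp : cfP α (n+2) = cfA α (n+2) * cfP α (n+1) + cfP α n := rfl
    have her := etaCF_recur hα hirr n
    rw [hq, hp]
    push_cast
    have e1 := ih1
    have e2 := ih2
    have : ((cfA α (n+2) : ℝ) * (cfQ α (n+1):ℝ) + (cfQ α n:ℝ)) * α -
        ((cfA α (n+2):ℝ) * (cfP α (n+1):ℝ) + (cfP α n:ℝ))
        = (cfA α (n+2):ℝ) * ((cfQ α (n+1):ℝ) * α - (cfP α (n+1):ℝ))
          + ((cfQ α n:ℝ) * α - (cfP α n:ℝ)) := by ring
    rw [this, e2, e1, her]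
    ring
end CF2

section CF3
variable {α : ℝ} (hα : α ∈ Set.Ioo (0:ℝ) 1) (hirr : Irrational α)
include hα hirr

lemma cfDet (n : ℕ) : cfP α (n+1) * cfQ α n - cfQ α (n+1) * cfP α n = (-1)^n := by
  induction n with
  | zero => simp [cfP, cfQ]
  | succ n ih =>
    have hq : cfQ α (n+2) = cfA α (n+2) * cfQ α (n+1) + cfQ α n := rfl
    have hp : cfP α (n+2) = cfA α (n+2) * cfP α (n+1) + cfP α n := rfl
    rw [hq, hp]
    have : (cfA α (n+2) * cfP α (n+1) + cfP α n) * cfQ α (n+1) -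
        (cfA α (n+2) * cfQ α (n+1) + cfQ α n) * cfP α (n+1)
        = -(cfP α (n+1) * cfQ α n - cfQ α (n+1) * cfP α n) := by ring
    rw [this, ih]
    ring

lemma cfCoprime (n : ℕ) : ∃ b : ℤ, (cfQ α n) ∣ (cfP α n * b - 1) := by
  have h := cfDet hα hirr n
  rcases Nat.even_or_odd n with he | ho
  · refine ⟨-(cfQ α (n+1)), ⟨-(cfP α (n+1)), ?_⟩⟩
    have : (-1:ℤ)^n = 1 := Even.neg_one_pow he
    nlinarith [h, this]
  · refine ⟨cfQ α (n+1), ⟨cfP α (n+1), ?_⟩⟩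
    have : (-1:ℤ)^n = -1 := Odd.neg_one_pow ho
    nlinarith [h, this]

-- best approximation: for 0 < |t| < q_{n+1}, and any l : |tα - l| ≥ η_n
lemma cfBestApprox (n : ℕ) (t l : ℤ) (ht : t ≠ 0) (hlt : |t| < cfQ α (n+1)) :
    etaCF α n ≤ |(t:ℝ) * α - (l:ℝ)| := by
  set Q1 := cfQ α (n+1) with hQ1
  set Q0 := cfQ α n with hQ0
  set P1 := cfP α (n+1) with hP1
  set P0 := cfP α n with hP0
  have hdet : P1 * Q0 - Q1 * P0 = (-1)^n := cfDet hα hirr n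
  have hq0 : 1 ≤ Q0 := cfQ_pos hα hirr n
  have hq1 : 1 ≤ Q1 := cfQ_pos hα hirr (n+1)
  set c : ℤ := (-1)^(n+1) * (P0 * t - Q0 * l) with hc
  set d : ℤ := (-1)^(n+1) * (Q1 * l - P1 * t) with hd
  have hsq : ((-1:ℤ)^(n+1)) * ((-1:ℤ)^(n+1)) = 1 := by
    rcases Nat.even_or_odd (n+1) with he | ho
    · rw [Even.neg_one_pow he]; ring
    · rw [Odd.neg_one_pow ho]; ring
  have hsqn : ((-1:ℤ)^n) * ((-1:ℤ)^n) = 1 := by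
    rcases Nat.even_or_odd n with he | ho
    · rw [Even.neg_one_pow he]; norm_num
    · rw [Odd.neg_one_pow ho]; norm_num
  have ht' : c * Q1 + d * Q0 = t := by
    rw [hc, hd]
    linear_combination ((-1:ℤ)^n * t) * hdet + t * hsqn
  have hl' : c * P1 + d * P0 = l := by
    rw [hc, hd]
    linear_combination ((-1:ℤ)^n * l) * hdet + l * hsqn
  -- real identity: tα - l = c e_{n+1} + d e_n
  have hIn := cfQ_identity hα hirr n
  have hIn1 := cfQ_identity hα hirr (n+1)
  have hreal : (t:ℝ) * α - (l:ℝ) =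
      (c:ℝ) * ((-1)^(n+1) * etaCF α (n+1)) + (d:ℝ) * ((-1)^n * etaCF α n) := by
    rw [← hIn, ← hIn1, ← ht', ← hl']
    push_cast
    ring
  have hdne : d ≠ 0 := by
    intro h0
    rw [h0] at ht'
    simp at ht'
    -- t = c * Q1
    rcases eq_or_ne c 0 with hc0 | hc0
    · rw [hc0] at ht'; simp at ht'; exact ht ht'.symm
    · have : Q1 ≤ |t| := by
        rw [← ht', abs_mul]
        calc Q1 = 1 * Q1 := (one_mul _).symm
        _ ≤ |c| * |Q1| := by
            have : (1:ℤ) ≤ |c| := Int.one_le_abs hc0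
            have : |Q1| = Q1 := abs_of_pos (by omega)
            nlinarith [abs_nonneg c, this]
      omega
  have hepos := etaCF_pos hα hirr n
  have hepos1 := etaCF_pos hα hirr (n+1)
  rcases eq_or_ne c 0 with hc0 | hc0
  · rw [hc0] at hreal
    simp at hreal
    rw [hreal]
    rw [abs_mul, abs_mul]
    have h1 : |((-1:ℝ))^n| = 1 := by
      rw [abs_pow]; simp
    rw [abs_pow] at *
    have : |(d:ℝ)| ≥ 1 := by
      have := Int.one_le_abs hdne
      calc (1:ℝ) ≤ (|d| : ℤ) := by exact_mod_cast this
      _ = |(d:ℝ)| := by push_cast; rfl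
    calc etaCF α n = 1 * (1 * etaCF α n) := by ring
    _ ≤ |(d:ℝ)| * (1 * etaCF α n) := by nlinarith
    _ = |(d:ℝ)| * (|(-1:ℝ)|^n * |etaCF α n|) := by
        rw [abs_of_pos hepos]; simp
  · -- c ≠ 0, d ≠ 0: show c and d have opposite signs
    have hsign : c * d < 0 := by
      rcases lt_trichotomy (c * d) 0 with h | h | h
      · exact h
      · exfalso; rcases mul_eq_zero.1 h with h' | h' <;> [exact hc0 h'; exact hdne h']
      · exfalso
        -- same signs: |t| = |c| Q1 + |d| Q0 ≥ Q1
        have habs : |t| = |c| * Q1 + |d| * Q0 := by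
          rw [← ht']
          rcases lt_trichotomy c 0 with hcn | hcz | hcp
          · have hdn : d < 0 := by nlinarith
            rw [abs_of_neg hcn, abs_of_neg hdn, abs_of_nonpos (by nlinarith : c * Q1 + d * Q0 ≤ 0)]
            ring
          · exact absurd hcz hc0
          · have hdp : 0 < d := by nlinarith
            rw [abs_of_pos hcp, abs_of_pos hdp, abs_of_pos (by nlinarith : 0 < c * Q1 + d * Q0)]
        have : Q1 ≤ |t| := by
          rw [habs]
          have h1 : 1 ≤ |c| := Int.one_le_abs hc0
          have h2 : 1 ≤ |d| := Int.one_le_abs hdne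
          nlinarith
        omega
    set u : ℝ := (c:ℝ) * (-1)^(n+1) with hu
    set v : ℝ := (d:ℝ) * (-1)^n with hv
    have hreal2 : (t:ℝ) * α - (l:ℝ) = u * etaCF α (n+1) + v * etaCF α n := by
      rw [hreal, hu, hv]; ring
    have hsq' : ((-1:ℝ)^n) * ((-1:ℝ)^n) = 1 := by
      rcases Nat.even_or_odd n with he | ho
      · rw [Even.neg_one_pow he]; norm_num
      · rw [Odd.neg_one_pow ho]; norm_num
    have huvcd : u * v = -((c:ℝ) * (d:ℝ)) := by
      rw [hu, hv]
      linear_combination (-(c:ℝ) * (d:ℝ)) * hsq'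
    have hsignR : (0:ℝ) < u * v := by
      rw [huvcd]
      have : ((c * d : ℤ) : ℝ) < 0 := by exact_mod_cast hsign
      push_cast at this; linarith
    have hvabs : 1 ≤ |v| := by
      rw [hv, abs_mul, abs_pow, abs_neg, abs_one, one_pow, mul_one]
      have := Int.one_le_abs hdne
      calc (1:ℝ) ≤ (|d| : ℤ) := by exact_mod_cast this
      _ = |(d:ℝ)| := by push_cast; rfl
    rw [hreal2]
    rcases lt_trichotomy u 0 with hun | huz | hup
    · have hvn : v < 0 := by nlinarith
      have hvn' : v ≤ -1 := by rw [abs_of_neg hvn] at hvabs; linarith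
      have h1 : u * etaCF α (n+1) < 0 := mul_neg_of_neg_of_pos hun hepos1
      have h2 : v * etaCF α n ≤ (-1) * etaCF α n :=
        mul_le_mul_of_nonneg_right hvn' hepos.le
      rw [abs_of_neg (by linarith : u * etaCF α (n+1) + v * etaCF α n < 0)]
      linarith
    · exfalso; rw [huz] at hsignR; simp at hsignR
    · have hvp : 0 < v := by nlinarith
      have hvp' : 1 ≤ v := by rw [abs_of_pos hvp] at hvabs; linarith
      have h1 : 0 < u * etaCF α (n+1) := mul_pos hup hepos1
      have h2 : etaCF α n ≤ v * etaCF α n := le_mul_of_one_le_left hepos.le hvp'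
      rw [abs_of_pos (by linarith : 0 < u * etaCF α (n+1) + v * etaCF α n)]
      linarith
end CF3

section CF4
variable {α : ℝ} (hα : α ∈ Set.Ioo (0:ℝ) 1) (hirr : Irrational α)
include hα hirr

lemma distZ_q_alpha (n : ℕ) (hn : 1 ≤ n) :
    distZ ((cfQ α n : ℝ) * α) = etaCF α n := by
  have hid := cfQ_identity hα hirr n
  have hpos := etaCF_pos hα hirr n
  have hhalf := etaCF_lt_half hα hirr n hn
  set e : ℝ := (cfQ α n : ℝ) * α - (cfP α n : ℝ) with he
  have habs : |e| = etaCF α n := by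
    rw [show |e| = |(-1:ℝ)^n * etaCF α n| by rw [← hid],
      abs_mul, abs_pow, abs_neg, abs_one, one_pow, one_mul, abs_of_pos hpos]
  have hlt : |e| < 1/2 := by rw [habs]; exact hhalf
  have harg : (cfQ α n : ℝ) * α = (cfP α n : ℝ) + e := by rw [he]; ring
  have hround : round ((cfQ α n : ℝ) * α) = cfP α n := by
    rw [harg, round_intCast_add]
    have : round e = 0 := by
      rw [round_eq_zero_iff]
      constructor
      · cases' abs_lt.1 hlt with h1 h2; linarith
      · cases' abs_lt.1 hlt with h1 h2; linarith
    rw [this, add_zero]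
  unfold distZ
  rw [hround, harg]
  rw [show (cfP α n : ℝ) + e - (cfP α n : ℝ) = e by ring]
  exact habs

end CF4


end Aux

set_option maxHeartbeats 2000000 in
/-- existence of a `θ`-minimal pair `(m_n, ℓ_n)` on scale `q_n`
for all sufficiently large `n`. -/
theorem thetaMinimal_exists
    (α θ : ℝ) (hα : α ∈ Set.Ioo (0 : ℝ) 1) (hirr : Irrational α)
    (hθ : ∀ j m : ℤ, θ ≠ 1 / 2 + (j : ℝ) * α + (m : ℝ)) :
    ∃ N : ℕ, ∀ n : ℕ, N ≤ n → ∃ m ℓ : ℤ, ThetaMinimal α θ n m ℓ := by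
  refine ⟨1, fun n hn => ?_⟩
  obtain ⟨m0, rfl⟩ : ∃ m0, n = m0 + 1 := ⟨n - 1, by omega⟩
  set n1 := m0 + 1 with hn1
  -- abbreviations
  set q : ℤ := cfQ α n1 with hqdef
  set p : ℤ := cfP α n1 with hpdef
  set η : ℝ := etaCF α n1 with hηdef
  set F : ℝ := etaCF α m0 with hFdef
  set A : ℤ := cfA α (n1 + 1) with hAdef
  have hq1 : 1 ≤ q := cfQ_pos hα hirr n1
  have hqR : (1:ℝ) ≤ (q:ℝ) := by exact_mod_cast hq1
  have hqR0 : (0:ℝ) < (q:ℝ) := by linarith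
  have hη : 0 < η := etaCF_pos hα hirr n1
  have hη2 : 0 < etaCF α (n1+1) := etaCF_pos hα hirr (n1+1)
  have hF : 0 < F := etaCF_pos hα hirr m0
  have hFA : (A:ℝ) * η ≤ F := by
    have hrec : F = (A:ℝ) * η + etaCF α (n1+1) := etaCF_recur hα hirr m0
    linarith
  set e : ℝ := (q:ℝ) * α - (p:ℝ) with hedef
  have habse : |e| = η := by
    rw [hedef, show (q:ℝ)*α - p = (-1)^n1 * η from cfQ_identity hα hirr n1,
      abs_mul, abs_pow, abs_neg, abs_one, one_pow, one_mul, abs_of_pos hη]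
  have hene : e ≠ 0 := by
    intro h; rw [h] at habse; simp at habse; linarith
  set θ' : ℝ := θ - 1/2 with hθ'def
  set d : ℤ → ℝ := fun t => distZ (θ' + (t:ℝ) * α) with hddef
  -- the window
  set W : Finset ℤ := (Finset.Icc (-q) q).filter (fun x => -q ≤ 2*x ∧ 2*x < q) with hWdef
  have hWmem : ∀ x : ℤ, x ∈ W ↔ (-q ≤ 2*x ∧ 2*x < q) := by
    intro x
    rw [hWdef, Finset.mem_filter, Finset.mem_Icc]
    constructor
    · rintro ⟨_, h⟩; exact h
    · rintro ⟨h1, h2⟩; exact ⟨⟨by omega, by omega⟩, h1, h2⟩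
  have hW0 : (0:ℤ) ∈ W := (hWmem 0).2 ⟨by omega, by omega⟩
  obtain ⟨ms, hmsW, hmin⟩ := Finset.exists_min_image W d ⟨0, hW0⟩
  obtain ⟨hms1, hms2⟩ := (hWmem ms).1 hmsW
  -- construction of m̂
  set r : ℤ := round ((q:ℝ) * θ') with hrdef
  set s : ℝ := (q:ℝ) * θ' - r with hsdef
  have hsabs : distZ ((q:ℝ) * θ') = |s| := rfl
  obtain ⟨b, hb⟩ := cfCoprime hα hirr n1
  set mm : ℤ := (-r * b) % q with hmmdef
  set mh : ℤ := if 2 * mm < q then mm else mm - q with hmhdef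
  have hmm0 : 0 ≤ mm := Int.emod_nonneg _ (by omega)
  have hmmq : mm < q := Int.emod_lt_of_pos _ (by omega)
  have hmhW : mh ∈ W := by
    rw [hWmem, hmhdef]
    split <;> rename_i h <;> omega
  have hmhcong : q ∣ (mh - (-r * b)) := by
    have h1 : q ∣ (mm - (-r * b)) := by
      rw [hmmdef, Int.emod_def]
      exact ⟨-((-r * b) / q), by ring⟩
    rw [hmhdef]
    split
    · exact h1
    · obtain ⟨c, hc⟩ := h1
      exact ⟨c - 1, by linarith [hc]⟩
  have hdvd : q ∣ (r + mh * p) := by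
    have heq : r + mh * p = -(r * (p * b - 1)) + (mh - (-r * b)) * p := by ring
    rw [heq]
    exact dvd_add (dvd_neg.2 (hb.mul_left r)) (hmhcong.mul_right p)
  set Mint : ℤ := (r + mh * p) / q with hMintdef
  have hMint : (Mint : ℝ) * q = (r:ℝ) + (mh:ℝ) * (p:ℝ) := by
    have := Int.ediv_mul_cancel hdvd
    exact_mod_cast this
  have hmhabs : (|mh|:ℝ) ≤ (q:ℝ)/2 := by
    obtain ⟨h1, h2⟩ := (hWmem mh).1 hmhW
    have h1R : (-q:ℝ) ≤ 2*(mh:ℝ) := by exact_mod_cast h1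
    have h2R : 2*(mh:ℝ) < (q:ℝ) := by exact_mod_cast h2
    rw [abs_le]; constructor <;> linarith
  have hdmh : d mh ≤ |s|/(q:ℝ) + η/2 := by
    have key2 : (q:ℝ) * (θ' + (mh:ℝ) * α - (Mint:ℝ)) = s + (mh:ℝ)*e := by
      rw [hsdef, hedef]
      linear_combination (-1 : ℝ) * hMint
    have key : θ' + (mh:ℝ) * α - (Mint:ℝ) = (s + (mh:ℝ)*e)/(q:ℝ) := by
      rw [eq_div_iff (ne_of_gt hqR0)]
      linear_combination key2
    calc d mh ≤ |θ' + (mh:ℝ)*α - (Mint:ℝ)| := distZ_le_abs_sub_int _ _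
    _ = |s + (mh:ℝ)*e|/(q:ℝ) := by rw [key, abs_div, abs_of_pos hqR0]
    _ ≤ (|s| + |(mh:ℝ)| * |e|)/(q:ℝ) := by
        apply (div_le_div_iff_of_pos_right hqR0).2
        calc |s + (mh:ℝ)*e| ≤ |s| + |(mh:ℝ)*e| := abs_add_le _ _
        _ = |s| + |(mh:ℝ)| * |e| := by rw [abs_mul]
    _ ≤ (|s| + ((q:ℝ)/2)*η)/(q:ℝ) := by
        apply (div_le_div_iff_of_pos_right hqR0).2
        have h1 : |(mh:ℝ)| = (|mh|:ℝ) := by push_cast; rfl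
        have : |(mh:ℝ)| * |e| ≤ ((q:ℝ)/2) * η := by
          rw [habse, h1]
          apply mul_le_mul_of_nonneg_right hmhabs hη.le
        linarith
    _ = |s|/(q:ℝ) + η/2 := by field_simp
  have hd0 : d ms ≤ |s|/(q:ℝ) + η/2 := le_trans (hmin mh hmhW) hdmh
  -- the shift ℓ
  set Ns : ℤ := round (θ' + (ms:ℝ)*α) with hNsdef
  set xt : ℝ := θ' + (ms:ℝ)*α - Ns with hxtdef
  have hxtabs : d ms = |xt| := rfl
  set L : ℤ := round (-(xt/e)) with hLdef
  have hL1 : |xt + (L:ℝ)*e| ≤ η/2 := by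
    have h := abs_sub_round (-(xt/e))
    have heq : xt + (L:ℝ)*e = -e * (-(xt/e) - L) := by field_simp; ring
    rw [heq, abs_mul, abs_neg, habse]
    calc η * |(-(xt/e) - L)| ≤ η * (1/2) := by
          apply mul_le_mul_of_nonneg_left h hη.le
    _ = η/2 := by ring
  have hL2 : (|L|:ℝ) ≤ |xt|/η + 1/2 := by
    have := abs_round_le (-(xt/e))
    rw [← hLdef] at this
    calc (|L|:ℝ) ≤ |(-(xt/e))| + 1/2 := by exact_mod_cast this
    _ = |xt|/η + 1/2 := by rw [abs_neg, abs_div, habse]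
  refine ⟨ms, L, ⟨?_, ?_⟩, ?_, ?_, ?_, ?_⟩
  · -- condition 1a
    have h1R : (-q:ℝ) ≤ 2*(ms:ℝ) := by exact_mod_cast hms1
    linarith
  · -- condition 1b
    have h2R : 2*(ms:ℝ) < (q:ℝ) := by exact_mod_cast hms2
    linarith
  · -- condition 2
    set E := Real.exp (deltaIdx α θ n1 * (q:ℝ)) with hEdef
    have hEpos : 0 < E := Real.exp_pos _
    have hsE : |s| ≤ E * η := by
      rcases eq_or_ne s 0 with h0 | hs0
      · rw [h0]; simp; positivity
      · have hspos : 0 < |s| := abs_pos.2 hs0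
        have hdz2 : distZ ((q:ℝ) * α) = η := distZ_q_alpha hα hirr n1 (by omega)
        have hδ : deltaIdx α θ n1 * (q:ℝ) = Real.log |s| - Real.log η := by
          have hdz1 : distZ ((cfQ α n1 : ℝ) * (θ - 1/2)) = |s| := hsabs
          rw [deltaIdx, hdz1]
          rw [show distZ ((cfQ α n1:ℝ) * α) = η from hdz2]
          field_simp
          exact mul_div_cancel_right₀ _ (ne_of_gt hqR0)
        rw [hEdef, hδ, Real.exp_sub, Real.exp_log hspos, Real.exp_log hη]
        rw [div_mul_cancel₀ _ (ne_of_gt hη)]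
    have h2 : |xt| ≤ |s|/(q:ℝ) + η/2 := by rw [← hxtabs]; exact hd0
    have ha1 : |xt| * (q:ℝ) ≤ |s| + η * (q:ℝ) / 2 := by
      have := mul_le_mul_of_nonneg_right h2 (le_of_lt hqR0)
      calc |xt| * (q:ℝ) ≤ (|s|/(q:ℝ) + η/2) * (q:ℝ) := this
      _ = |s| + η * (q:ℝ)/2 := by field_simp
    have ha2 : (|L|:ℝ) * (q:ℝ) ≤ (|xt|/η) * (q:ℝ) + (q:ℝ)/2 := by
      have := mul_le_mul_of_nonneg_right hL2 (le_of_lt hqR0)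
      calc (|L|:ℝ) * (q:ℝ) ≤ (|xt|/η + 1/2) * (q:ℝ) := this
      _ = (|xt|/η) * (q:ℝ) + (q:ℝ)/2 := by ring
    have ha3 : (|xt|/η) * (q:ℝ) = (|xt| * (q:ℝ))/η := by ring
    have ha4 : (|xt| * (q:ℝ))/η ≤ (|s| + η * (q:ℝ)/2)/η :=
      (div_le_div_iff_of_pos_right hη).2 ha1
    have ha5 : (|s| + η * (q:ℝ)/2)/η = |s|/η + (q:ℝ)/2 := by field_simp
    have ha6 : |s|/η ≤ E := by rw [div_le_iff₀ hη]; linarith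
    rw [le_div_iff₀ hqR0]
    linarith
  · -- condition 3
    rw [distZ_q_alpha hα hirr n1 (by omega)]
    have harg : θ - 1/2 + ((ms:ℝ) + (L:ℝ)*(cfQ α n1:ℝ))*α - ((Ns + L*p : ℤ):ℝ)
        = xt + (L:ℝ)*e := by
      rw [hxtdef, hedef]
      push_cast
      ring
    have hle : distZ (θ - 1/2 + ((ms:ℝ) + (L:ℝ)*(cfQ α n1:ℝ))*α) ≤ η/2 := by
      calc distZ (θ - 1/2 + ((ms:ℝ) + (L:ℝ)*(cfQ α n1:ℝ))*α)
          ≤ |θ - 1/2 + ((ms:ℝ) + (L:ℝ)*(cfQ α n1:ℝ))*α - ((Ns + L*p : ℤ):ℝ)| :=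
            distZ_le_abs_sub_int _ _
      _ = |xt + (L:ℝ)*e| := by rw [harg]
      _ ≤ η/2 := hL1
    have hq2 : 0 < 1/(2*(q:ℝ)) := by positivity
    have : η/2 < (1/2 + 1/(2*(q:ℝ))) * η := by nlinarith
    calc distZ (θ - 1/2 + ((ms:ℝ) + (L:ℝ)*(cfQ α n1:ℝ))*α) ≤ η/2 := hle
    _ < (1/2 + 1/(2*(q:ℝ))) * η := this
  · -- condition 4
    intro hA4 j hj k hk
    set M := distZ (θ - 1/2 + ((ms:ℝ) + (j:ℝ)*(cfQ α n1:ℝ))*α) with hMdef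
    set D := distZ (θ - 1/2 + ((ms:ℝ) + (j:ℝ)*(cfQ α n1:ℝ) + (k:ℝ))*α) with hDdef
    show M ≤ 20 * D
    rcases eq_or_ne k 0 with hk0 | hk0
    · have hDM : D = M := by
        rw [hDdef, hMdef, hk0]
        norm_num
      have hM0 : 0 ≤ M := by rw [hMdef]; exact distZ_nonneg _
      rw [hDM]; linarith
    by_contra hcon
    push_neg at hcon
    -- hcon : 20 * D < M
    have hM1 : M ≤ d ms + (|j|:ℝ) * η := by
      have harg : θ - 1/2 + ((ms:ℝ) + (j:ℝ)*(cfQ α n1:ℝ))*α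
          = (θ' + (ms:ℝ)*α + (j:ℝ)*e) + ((j*p : ℤ):ℝ) := by
        rw [hθ'def, hedef]; push_cast; ring
      calc M = distZ ((θ' + (ms:ℝ)*α + (j:ℝ)*e) + ((j*p : ℤ):ℝ)) := by rw [hMdef, harg]
      _ = distZ ((θ' + (ms:ℝ)*α) + (j:ℝ)*e) := by rw [distZ_add_int]
      _ ≤ distZ (θ' + (ms:ℝ)*α) + |(j:ℝ)*e| := distZ_add_abs_le _ _
      _ = d ms + (|j|:ℝ) * η := by
          rw [abs_mul, habse]
    set r' : ℤ := ms + j*q + k with hr'def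
    have hr'R : (r':ℝ) = (ms:ℝ) + (j:ℝ)*(q:ℝ) + (k:ℝ) := by
      rw [hr'def]; push_cast; ring
    have hDd : D = d r' := by
      rw [hDdef, hddef]
      congr 1
      rw [hr'R, hθ'def]
    set mm' : ℤ := r' % q with hmm'def
    have hmm'0 : 0 ≤ mm' := Int.emod_nonneg _ (by omega)
    have hmm'q : mm' < q := Int.emod_lt_of_pos _ (by omega)
    set m' : ℤ := if 2 * mm' < q then mm' else mm' - q with hm'def
    have hm'W : m' ∈ W := by
      rw [hWmem, hm'def]
      split <;> omega
    have hm'cong : q ∣ (r' - m') := by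
      have h1 : q ∣ (r' - mm') := by
        rw [hmm'def, Int.emod_def]
        exact ⟨r' / q, by ring⟩
      rw [hm'def]
      split
      · exact h1
      · obtain ⟨c, hc⟩ := h1
        exact ⟨c + 1, by linarith [hc]⟩
    obtain ⟨j', hj'eq0⟩ := hm'cong
    have hj'eq : r' = m' + j' * q := by linarith [hj'eq0]
    have hj'b : |j'| ≤ |j| + 1 := by
      have h1 : (j' - j) * q = ms + k - m' := by
        have h2 : r' = ms + j*q + k := hr'def
        nlinarith [hj'eq, h2]
      have hms_abs : 2 * |ms| ≤ q := by
        rw [show (2:ℤ) * |ms| = |2*ms| by rw [abs_mul]; norm_num, abs_le]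
        omega
      have hm'_abs : 2 * |m'| ≤ q := by
        obtain ⟨ha1, ha2⟩ := (hWmem m').1 hm'W
        rw [show (2:ℤ) * |m'| = |2*m'| by rw [abs_mul]; norm_num, abs_le]
        omega
      have hk_abs : |k| ≤ q - 1 := by omega
      have h3 : |j' - j| * q < 2 * q := by
        have : |(j' - j) * q| = |j' - j| * q := by
          rw [abs_mul, abs_of_pos (by omega : (0:ℤ) < q)]
        rw [← this, h1]
        calc |ms + k - m'| ≤ |ms| + |k| + |m'| := by
              have := abs_add_le (ms + k) (-m')
              have h5 := abs_add_le ms k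
              simp only [abs_neg] at this
              calc |ms + k - m'| = |(ms + k) + (-m')| := by ring_nf
              _ ≤ |ms + k| + |m'| := by rw [← abs_neg m']; exact abs_add_le _ _
              _ ≤ |ms| + |k| + |m'| := by linarith
        _ < 2 * q := by omega
      have h4 : |j' - j| < 2 := by
        by_contra h5
        push_neg at h5
        nlinarith [h3, h5]
      have := abs_sub_abs_le_abs_sub j' j
      omega
    have hd0m' : d ms ≤ d m' := hmin m' hm'W
    have hdm' : d m' ≤ D + (|j'|:ℝ) * η := by
      have hm'R : (m':ℝ) = (r':ℝ) - (j':ℝ)*(q:ℝ) := by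
        have : ((m' : ℤ):ℝ) = ((r' - j'*q : ℤ):ℝ) := by
          congr 1; omega
        push_cast at this
        linarith [this]
      have harg2 : θ' + (m':ℝ)*α
          = ((θ' + (r':ℝ)*α) + (-(j':ℝ))*e) + ((-(j'*p) : ℤ):ℝ) := by
        rw [hedef, hm'R]; push_cast; ring
      calc d m' = distZ (((θ' + (r':ℝ)*α) + (-(j':ℝ))*e) + ((-(j'*p) : ℤ):ℝ)) := by
            rw [hddef]; exact congrArg distZ harg2
      _ = distZ ((θ' + (r':ℝ)*α) + (-(j':ℝ))*e) := by rw [distZ_add_int]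
      _ ≤ distZ (θ' + (r':ℝ)*α) + |(-(j':ℝ))*e| := distZ_add_abs_le _ _
      _ = D + (|j'|:ℝ) * η := by
          rw [hDd, abs_mul, habse, abs_neg]
    have hFk : F ≤ distZ ((k:ℝ)*α) := by
      have hklt : |k| < cfQ α (m0+1) := hk
      exact cfBestApprox hα hirr m0 k (round ((k:ℝ)*α)) hk0 hklt
    have hkDM : distZ ((k:ℝ)*α) ≤ D + M := by
      have harg3 : (k:ℝ)*α = (θ' + (r':ℝ)*α) - (θ' + ((ms:ℝ)+(j:ℝ)*(q:ℝ))*α) := by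
        rw [hr'R]; ring
      calc distZ ((k:ℝ)*α)
          = distZ ((θ' + (r':ℝ)*α) - (θ' + ((ms:ℝ)+(j:ℝ)*(q:ℝ))*α)) := by rw [harg3]
      _ ≤ distZ (θ' + (r':ℝ)*α) + distZ (θ' + ((ms:ℝ)+(j:ℝ)*(q:ℝ))*α) := distZ_sub_le _ _
      _ = D + M := by rw [hDd]
    have hjη : (|j|:ℝ) * η ≤ (A:ℝ) * η / 6 := by
      have := mul_le_mul_of_nonneg_right hj hη.le
      calc (|j|:ℝ) * η ≤ ((A:ℝ)/6) * η := this
      _ = (A:ℝ) * η / 6 := by ring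
    have hj'η : (|j'|:ℝ) * η ≤ (A:ℝ) * η / 6 + η := by
      have hc : (|j'|:ℝ) ≤ (|j|:ℝ) + 1 := by exact_mod_cast hj'b
      have := mul_le_mul_of_nonneg_right hc hη.le
      calc (|j'|:ℝ) * η ≤ ((|j|:ℝ) + 1) * η := this
      _ = (|j|:ℝ) * η + η := by ring
      _ ≤ (A:ℝ) * η / 6 + η := by linarith
    have h4η : 4 * η ≤ (A:ℝ) * η := by
      have hAR : (4:ℝ) ≤ (A:ℝ) := by exact_mod_cast hA4
      nlinarith
    linarith [hM1, hd0m', hdm', hFk, hkDM, hjη, hj'η, h4η, hη, hFA]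
  · -- condition 5
    intro hA3 k hk1 hk2
    have hkW : k ∈ W := by
      rw [hWmem]
      constructor
      · have h : (-q:ℝ) ≤ 2*(k:ℝ) := by push_cast; linarith [hk1]
        exact_mod_cast h
      · have h : 2*(k:ℝ) < (q:ℝ) := by push_cast; linarith [hk2]
        exact_mod_cast h
    have h := hmin k hkW
    have h1 : distZ (θ - 1/2 + (ms:ℝ)*α) = d ms := rfl
    have h2 : distZ (θ - 1/2 + (k:ℝ)*α) = d k := rfl
    rw [h1, h2]
    have hdk : 0 ≤ d k := distZ_nonneg (θ' + (k:ℝ)*α)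
    linarith
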